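/- Let Y be a probability space with probability measure μ, and equip Y^n with the normalized Hamming distance ρ(f,g) = (1/n)·#{i : f_i ≠ g_i}. For every measurable A ⊆ Y^n with μ^⊗n(A) ≥ 1/2 and every ε > 0, the ε-neighbourhood A_ε = {y ∈ Y^n : ρ(y, A) < ε} satisfies μ^⊗n(A_ε) ≥ 1 − C_1·exp(−C_2·ε²·n), where C_1, C_2 > 0 are absolute constants independent of Y, μ, n, and A. -/

import Mathlib

open MeasureTheory
open scoped ENNReal

/-- exp upper bound on `[0,1]`. -/
private lemma exp_le_quad {t : ℝ} (h0 : 0 ≤ t) (h1 : t ≤ 1) :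
    Real.exp t ≤ 1 + t + (3/4) * t ^ 2 := by
  have h := Real.exp_bound (by rw [abs_of_nonneg h0]; exact h1) (n := 2) (by norm_num)
  rw [abs_of_nonneg h0] at h
  have h2 := (abs_sub_le_iff.1 h).1
  simp [Finset.sum_range_succ, Nat.factorial] at h2 ⊢
  nlinarith [h2]

private lemma exp_le_quad_neg {t : ℝ} (h0 : 0 ≤ t) (h1 : t ≤ 1) :
    Real.exp (-t) ≤ 1 - t + (3/4) * t ^ 2 := by
  have h := Real.exp_bound (x := -t) (by rw [abs_neg, abs_of_nonneg h0]; exact h1)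
    (n := 2) (by norm_num)
  rw [abs_neg, abs_of_nonneg h0] at h
  have h2 := (abs_sub_le_iff.1 h).1
  simp [Finset.sum_range_succ, Nat.factorial] at h2 ⊢
  nlinarith [h2]

/-- The key one–dimensional inequality `(1 + e^t)² ≤ 4 e^t e^{t²/2}` for `t ∈ [0,1]`. -/
private lemma one_add_exp_sq_le {t : ℝ} (h0 : 0 ≤ t) (h1 : t ≤ 1) :
    (1 + Real.exp t) ^ 2 ≤ 4 * Real.exp t * Real.exp (t ^ 2 / 2) := by
  have hy0 : (0:ℝ) ≤ t / 2 := by linarith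
  have hy1 : t / 2 ≤ 1 := by linarith
  have e1 := exp_le_quad hy0 hy1
  have e2 := exp_le_quad_neg hy0 hy1
  -- cosh(t/2) ≤ 1 + (t/2)^2 ≤ exp((t/2)^2)
  have hcosh : Real.exp (t/2) + Real.exp (-(t/2)) ≤ 2 * Real.exp ((t/2)^2) := by
    have h3 : (1:ℝ) + (t/2)^2 ≤ Real.exp ((t/2)^2) := by
      have := Real.add_one_le_exp ((t/2)^2); linarith
    nlinarith [sq_nonneg (t/2)]
  -- hence 1 + e^t ≤ 2 e^{t/2} e^{(t/2)^2}
  have key : 1 + Real.exp t ≤ 2 * Real.exp (t/2) * Real.exp ((t/2)^2) := by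
    have hmul := mul_le_mul_of_nonneg_left hcosh (Real.exp_pos (t/2)).le
    have h4 : Real.exp (t/2) * Real.exp (-(t/2)) = 1 := by
      rw [← Real.exp_add]; simp
    have h5 : Real.exp (t/2) * Real.exp (t/2) = Real.exp t := by
      rw [← Real.exp_add]; ring_nf
    nlinarith [hmul]
  have hsq := mul_self_le_mul_self (by positivity) key
  calc (1 + Real.exp t) ^ 2 = (1 + Real.exp t) * (1 + Real.exp t) := by ring
    _ ≤ (2 * Real.exp (t/2) * Real.exp ((t/2)^2)) * (2 * Real.exp (t/2) * Real.exp ((t/2)^2)) := hsq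
    _ = 4 * (Real.exp (t/2) * Real.exp (t/2)) * (Real.exp ((t/2)^2) * Real.exp ((t/2)^2)) := by ring
    _ = 4 * Real.exp t * Real.exp (t ^ 2 / 2) := by
        rw [← Real.exp_add, ← Real.exp_add]; ring_nf

/-- The pointwise inequality used in the induction step, in `ℝ≥0∞`. -/
private lemma pointwise_bound {a b β c E : ℝ≥0∞} (ha : a ≤ 1) (hb : b ≤ β) (hβ : β ≤ 1)
    (hc : c ≠ ⊤) (hE : E ≠ ⊤) (hab : a * b ≤ c) (haβ : a * β ≤ c * E) :
    a * β ^ 2 + c * E * b ≤ c * β + c * E * β := by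
  have ha' : a ≠ ⊤ := (ha.trans_lt ENNReal.one_lt_top).ne
  have hβ' : β ≠ ⊤ := (hβ.trans_lt ENNReal.one_lt_top).ne
  have hb' : b ≠ ⊤ := ((hb.trans hβ).trans_lt ENNReal.one_lt_top).ne
  have hfin1 : a * β ^ 2 ≠ ⊤ := ENNReal.mul_ne_top ha' (ENNReal.pow_ne_top hβ')
  have hfin2 : c * E * b ≠ ⊤ := ENNReal.mul_ne_top (ENNReal.mul_ne_top hc hE) hb'
  have hfin3 : c * β ≠ ⊤ := ENNReal.mul_ne_top hc hβ'
  have hfin4 : c * E * β ≠ ⊤ := ENNReal.mul_ne_top (ENNReal.mul_ne_top hc hE) hβ'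
  rw [← ENNReal.toReal_le_toReal (ENNReal.add_ne_top.2 ⟨hfin1, hfin2⟩)
    (ENNReal.add_ne_top.2 ⟨hfin3, hfin4⟩)]
  rw [ENNReal.toReal_add hfin1 hfin2, ENNReal.toReal_add hfin3 hfin4]
  have hab' : a.toReal * b.toReal ≤ c.toReal := by
    rw [← ENNReal.toReal_mul]; exact ENNReal.toReal_mono hc hab
  have haβ' : a.toReal * β.toReal ≤ c.toReal * E.toReal := by
    rw [← ENNReal.toReal_mul, ← ENNReal.toReal_mul]
    exact ENNReal.toReal_mono (by finiteness) haβ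
  have hb2 : b.toReal ≤ β.toReal := ENNReal.toReal_mono hβ' hb
  have h0a : 0 ≤ a.toReal := ENNReal.toReal_nonneg
  have h0b : 0 ≤ b.toReal := ENNReal.toReal_nonneg
  have h0β : 0 ≤ β.toReal := ENNReal.toReal_nonneg
  have h0c : 0 ≤ c.toReal := ENNReal.toReal_nonneg
  have h0E : 0 ≤ E.toReal := ENNReal.toReal_nonneg
  simp only [ENNReal.toReal_mul, ENNReal.toReal_pow]
  set x := a.toReal; set y := b.toReal; set z := β.toReal
  set u := c.toReal; set v := E.toReal
  rcases le_total (v * y) z with h | h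
  · nlinarith [mul_le_mul_of_nonneg_right haβ' h0β, mul_le_mul_of_nonneg_left h h0c]
  · rcases eq_or_lt_of_le h0b with hb0 | hb0
    · have hz : z ≤ 0 := by nlinarith
      have hz0 : z = 0 := le_antisymm hz h0β
      rw [hz0, ← hb0]; ring_nf
      positivity
    · -- multiply goal by y > 0
      have hyW : (x * z ^ 2 + u * v * y) * y ≤ (u * z + u * v * z) * y := by
        nlinarith [mul_le_mul_of_nonneg_right hab' (sq_nonneg z),
          mul_nonneg (mul_nonneg h0c (sub_nonneg.2 hb2)) (sub_nonneg.2 h)]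
      exact le_of_mul_le_mul_right hyW hb0

private lemma diff_cons_subset {Y : Type} {n : ℕ} (x w : Y) (y z : Fin n → Y) :
    {i : Fin (n+1) | (Fin.cons x y : Fin (n+1) → Y) i ≠ (Fin.cons w z : Fin (n+1) → Y) i} ⊆
      insert 0 (Fin.succ '' {j | y j ≠ z j}) := by
  intro i hi
  induction i using Fin.cases with
  | zero => exact Set.mem_insert _ _
  | succ j =>
    simp only [Set.mem_setOf_eq, Fin.cons_succ] at hi
    exact Set.mem_insert_of_mem _ ⟨j, hi, rfl⟩

private lemma diff_cons_subset_same {Y : Type} {n : ℕ} (x : Y) (y z : Fin n → Y) :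
    {i : Fin (n+1) | (Fin.cons x y : Fin (n+1) → Y) i ≠ (Fin.cons x z : Fin (n+1) → Y) i} ⊆ Fin.succ '' {j | y j ≠ z j} := by
  intro i hi
  induction i using Fin.cases with
  | zero => simp at hi
  | succ j =>
    simp only [Set.mem_setOf_eq, Fin.cons_succ] at hi
    exact ⟨j, hi, rfl⟩

private lemma card_diff_cons_le {Y : Type} {n : ℕ} (x w : Y) (y z : Fin n → Y) :
    ({i : Fin (n+1) | (Fin.cons x y : Fin (n+1) → Y) i ≠ (Fin.cons w z : Fin (n+1) → Y) i}).ncard ≤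
      ({j : Fin n | y j ≠ z j}).ncard + 1 := by
  calc ({i : Fin (n+1) | (Fin.cons x y : Fin (n+1) → Y) i ≠ (Fin.cons w z : Fin (n+1) → Y) i}).ncard
      ≤ (insert 0 (Fin.succ '' {j | y j ≠ z j})).ncard :=
        Set.ncard_le_ncard (diff_cons_subset x w y z) (Set.toFinite _)
    _ ≤ (Fin.succ '' {j | y j ≠ z j}).ncard + 1 := Set.ncard_insert_le _ _
    _ = ({j : Fin n | y j ≠ z j}).ncard + 1 := by
        rw [Set.ncard_image_of_injective _ (Fin.succ_injective n)]

private lemma card_diff_cons_le_same {Y : Type} {n : ℕ} (x : Y) (y z : Fin n → Y) :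
    ({i : Fin (n+1) | (Fin.cons x y : Fin (n+1) → Y) i ≠ (Fin.cons x z : Fin (n+1) → Y) i}).ncard ≤
      ({j : Fin n | y j ≠ z j}).ncard := by
  calc ({i : Fin (n+1) | (Fin.cons x y : Fin (n+1) → Y) i ≠ (Fin.cons x z : Fin (n+1) → Y) i}).ncard
      ≤ (Fin.succ '' {j | y j ≠ z j}).ncard :=
        Set.ncard_le_ncard (diff_cons_subset_same x y z) (Set.toFinite _)
    _ = ({j : Fin n | y j ≠ z j}).ncard := by
        rw [Set.ncard_image_of_injective _ (Fin.succ_injective n)]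

/-- The key separation inequality, by induction on `n`:  if every point of `A` differs from
every point of `B` in at least `k` coordinates, then
`μⁿ(A) * μⁿ(B) ≤ exp (n t²/2 - t k)` for `t ∈ [0,1]`. -/
private lemma key_sep (Y : Type) [MeasurableSpace Y] (μ : Measure Y) [IsProbabilityMeasure μ]
    {t : ℝ} (ht0 : 0 ≤ t) (ht1 : t ≤ 1) :
    ∀ (n : ℕ) (k : ℝ) (A B : Set (Fin n → Y)), MeasurableSet A → MeasurableSet B →
      (∀ a ∈ A, ∀ b ∈ B, k ≤ (Set.ncard {i | a i ≠ b i} : ℝ)) →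
      Measure.pi (fun _ : Fin n => μ) A * Measure.pi (fun _ : Fin n => μ) B ≤
        ENNReal.ofReal (Real.exp (n * t ^ 2 / 2 - t * k)) := by
  intro n
  induction n with
  | zero =>
    intro k A B hA hB hsep
    rcases le_or_gt k 0 with hk | hk
    · have h1 : Measure.pi (fun _ : Fin 0 => μ) A ≤ 1 := prob_le_one
      have h2 : Measure.pi (fun _ : Fin 0 => μ) B ≤ 1 := prob_le_one
      have : (1:ENNReal) ≤ ENNReal.ofReal (Real.exp ((0:ℕ) * t ^ 2 / 2 - t * k)) := by
        rw [ENNReal.one_le_ofReal]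
        apply Real.one_le_exp
        simp only [Nat.cast_zero]
        nlinarith
      calc Measure.pi (fun _ : Fin 0 => μ) A * Measure.pi (fun _ : Fin 0 => μ) B
          ≤ 1 * 1 := mul_le_mul' h1 h2
        _ = 1 := by simp
        _ ≤ _ := this
    · rcases Set.eq_empty_or_nonempty A with hAe | ⟨a, haA⟩
      · simp [hAe]
      rcases Set.eq_empty_or_nonempty B with hBe | ⟨b, hbB⟩
      · simp [hBe]
      exfalso
      have := hsep a haA b hbB
      rw [Set.eq_empty_of_isEmpty {i : Fin 0 | a i ≠ b i}] at this
      simp only [Set.ncard_empty, Nat.cast_zero] at this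
      linarith
  | succ n ih =>
    intro k A B hA hB hsep
    rcases le_or_gt k 0 with hk | hk
    · have h1 : Measure.pi (fun _ : Fin (n+1) => μ) A ≤ 1 := prob_le_one
      have h2 : Measure.pi (fun _ : Fin (n+1) => μ) B ≤ 1 := prob_le_one
      have h3 : (1:ENNReal) ≤ ENNReal.ofReal (Real.exp ((n+1:ℕ) * t ^ 2 / 2 - t * k)) := by
        rw [ENNReal.one_le_ofReal]
        apply Real.one_le_exp
        have : (0:ℝ) ≤ (n+1:ℕ) * t ^ 2 / 2 := by positivity
        nlinarith
      calc Measure.pi (fun _ : Fin (n+1) => μ) A * Measure.pi (fun _ : Fin (n+1) => μ) B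
          ≤ 1 * 1 := mul_le_mul' h1 h2
        _ = 1 := by simp
        _ ≤ _ := h3
    · -- main induction step
      set ν := Measure.pi (fun _ : Fin n => μ) with hν
      set π := Measure.pi (fun _ : Fin (n+1) => μ) with hπ
      set e := MeasurableEquiv.piFinSuccAbove (fun _ : Fin (n+1) => Y) 0 with he
      have hmp : MeasurePreserving e π (μ.prod ν) :=
        measurePreserving_piFinSuccAbove (fun _ : Fin (n+1) => μ) 0
      have hconsA : ∀ x (y' : Fin n → Y), e.symm (x, y') = Fin.cons x y' := by
        intro x y'
        simp [he, MeasurableEquiv.piFinSuccAbove_symm_apply, Fin.insertNth_zero',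
          Fin.consEquiv]
      have hmA : MeasurableSet (e.symm ⁻¹' A) := e.symm.measurable hA
      have hmB : MeasurableSet (e.symm ⁻¹' B) := e.symm.measurable hB
      have hπA : π A = ∫⁻ x, ν (Prod.mk x ⁻¹' (e.symm ⁻¹' A)) ∂μ := by
        rw [← (MeasurePreserving.symm e hmp).measure_preimage hA.nullMeasurableSet, Measure.prod_apply hmA]
      have hπB : π B = ∫⁻ x, ν (Prod.mk x ⁻¹' (e.symm ⁻¹' B)) ∂μ := by
        rw [← (MeasurePreserving.symm e hmp).measure_preimage hB.nullMeasurableSet, Measure.prod_apply hmB]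
      set f : Y → ENNReal := fun x => ν (Prod.mk x ⁻¹' (e.symm ⁻¹' A)) with hf
      set g : Y → ENNReal := fun x => ν (Prod.mk x ⁻¹' (e.symm ⁻¹' B)) with hg
      have hfm : Measurable f := measurable_measure_prodMk_left hmA
      have hgm : Measurable g := measurable_measure_prodMk_left hmB
      set c := ENNReal.ofReal (Real.exp (n * t ^ 2 / 2 - t * k)) with hc
      set E := ENNReal.ofReal (Real.exp t) with hE
      -- section separation
      have hIH1 : ∀ x, f x * g x ≤ c := by
        intro x
        apply ih k _ _ (measurable_prodMk_left hmA) (measurable_prodMk_left hmB)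
        intro y' hy' z' hz'
        have h1 := hsep _ hy' _ hz'
        rw [hconsA x y', hconsA x z'] at h1
        have h2 := (Nat.cast_le (α := ℝ)).2 (card_diff_cons_le_same x y' z')
        exact h1.trans h2
      have hIH2 : ∀ x w, f x * g w ≤ c * E := by
        intro x w
        have h0 : f x * g w ≤ ENNReal.ofReal (Real.exp (n * t ^ 2 / 2 - t * (k-1))) := by
          apply ih (k-1) _ _ (measurable_prodMk_left hmA) (measurable_prodMk_left hmB)
          intro y' hy' z' hz'
          have h1 := hsep _ hy' _ hz'
          rw [hconsA x y', hconsA w z'] at h1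
          have h2 := (Nat.cast_le (α := ℝ)).2 (card_diff_cons_le x w y' z')
          push_cast at h2
          linarith
        refine h0.trans (le_of_eq ?_)
        rw [hc, hE, ← ENNReal.ofReal_mul (Real.exp_nonneg _), ← Real.exp_add]
        ring_nf
      set β := ⨆ w, g w with hβ
      have hg1 : ∀ w, g w ≤ 1 := fun w => prob_le_one
      have hβ1 : β ≤ 1 := iSup_le hg1
      have hfβ : ∀ x, f x * β ≤ c * E := by
        intro x
        rw [hβ, ENNReal.mul_iSup]
        exact iSup_le (hIH2 x)
      have hcne : c ≠ ⊤ := ENNReal.ofReal_ne_top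
      have hEne : E ≠ ⊤ := ENNReal.ofReal_ne_top
      have hpoint : ∀ x, f x * β ^ 2 + c * E * g x ≤ c * β + c * E * β := fun x =>
        pointwise_bound prob_le_one (le_iSup g x) hβ1 hcne hEne (hIH1 x) (hfβ x)
      have hint : π A * β ^ 2 + c * E * π B ≤ c * β + c * E * β := by
        have h1 : ∫⁻ x, (f x * β ^ 2 + c * E * g x) ∂μ ≤ ∫⁻ _, (c * β + c * E * β) ∂μ :=
          lintegral_mono fun x => hpoint x
        rw [lintegral_const, measure_univ, mul_one] at h1
        rw [lintegral_add_left (hfm.mul_const _)] at h1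
        rw [lintegral_mul_const _ hfm, lintegral_const_mul _ hgm] at h1
        rw [hπA, hπB]
        exact h1
      -- pass to the reals
      rcases eq_or_ne β 0 with hβ0 | hβ0
      · have hB0 : π B = 0 := by
          rw [hπB]
          have hall : ∀ x, g x = 0 := fun x => le_antisymm (hβ0 ▸ le_iSup g x) zero_le
          have hgz : g = fun _ => 0 := funext hall
          rw [hgz, lintegral_zero]
        rw [hB0, mul_zero]
        exact zero_le
      · have hπA1 : π A ≤ 1 := prob_le_one
        have hπB1 : π B ≤ 1 := prob_le_one
        have hAne' : π A ≠ ⊤ := (hπA1.trans_lt ENNReal.one_lt_top).ne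
        have hBne' : π B ≠ ⊤ := (hπB1.trans_lt ENNReal.one_lt_top).ne
        have hβne' : β ≠ ⊤ := (hβ1.trans_lt ENNReal.one_lt_top).ne
        set X := (π A).toReal with hX
        set M := (π B).toReal with hM
        set z := β.toReal with hz
        have hzpos : 0 < z := ENNReal.toReal_pos hβ0 hβne'
        have hcr : c.toReal = Real.exp (n * t ^ 2 / 2 - t * k) :=
          ENNReal.toReal_ofReal (Real.exp_nonneg _)
        have hEr : E.toReal = Real.exp t := ENNReal.toReal_ofReal (Real.exp_nonneg _)
        have hintR : X * z ^ 2 + c.toReal * E.toReal * M ≤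
            c.toReal * z + c.toReal * E.toReal * z := by
          have hfin1 : π A * β ^ 2 ≠ ⊤ := ENNReal.mul_ne_top hAne' (ENNReal.pow_ne_top hβne')
          have hfin2 : c * E * π B ≠ ⊤ := ENNReal.mul_ne_top (ENNReal.mul_ne_top hcne hEne) hBne'
          have h2 := ENNReal.toReal_mono
            (ENNReal.add_ne_top.2 ⟨ENNReal.mul_ne_top hcne hβne',
              ENNReal.mul_ne_top (ENNReal.mul_ne_top hcne hEne) hβne'⟩) hint
          rw [ENNReal.toReal_add hfin1 hfin2,
            ENNReal.toReal_add (ENNReal.mul_ne_top hcne hβne')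
              (ENNReal.mul_ne_top (ENNReal.mul_ne_top hcne hEne) hβne')] at h2
          simpa only [ENNReal.toReal_mul, ENNReal.toReal_pow, mul_comm] using h2
        -- AM-GM and the one-dimensional estimate
        have hX0 : 0 ≤ X := ENNReal.toReal_nonneg
        have hM0 : 0 ≤ M := ENNReal.toReal_nonneg
        have hcp : 0 < c.toReal := by rw [hcr]; exact Real.exp_pos _
        have hEp : 0 < E.toReal := by rw [hEr]; exact Real.exp_pos _
        have hamgm : 4 * (z ^ 2 * X) * (c.toReal * E.toReal * M) ≤
            (c.toReal * z + c.toReal * E.toReal * z) ^ 2 := by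
          have h6 : (X * z ^ 2 + c.toReal * E.toReal * M) ^ 2 ≤
              (c.toReal * z + c.toReal * E.toReal * z) ^ 2 := by
            apply pow_le_pow_left₀ (by positivity) hintR
          nlinarith [h6, sq_nonneg (X * z ^ 2 - c.toReal * E.toReal * M)]
        have hexp : (1 + E.toReal) ^ 2 ≤ 4 * E.toReal * Real.exp (t ^ 2 / 2) := by
          rw [hEr]; exact one_add_exp_sq_le ht0 ht1
        have hfinal : X * M ≤ c.toReal * Real.exp (t ^ 2 / 2) := by
          have h4 : 4 * E.toReal * (z ^ 2 * c.toReal) * (X * M) ≤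
              c.toReal ^ 2 * z ^ 2 * ((1 + E.toReal) ^ 2) := by nlinarith [hamgm]
          have h5 : c.toReal ^ 2 * z ^ 2 * ((1 + E.toReal) ^ 2) ≤
              c.toReal ^ 2 * z ^ 2 * (4 * E.toReal * Real.exp (t ^ 2 / 2)) := by
            apply mul_le_mul_of_nonneg_left hexp (by positivity)
          nlinarith [h4, h5, mul_pos (mul_pos (by positivity : (0:ℝ) < 4 * E.toReal)
            (by positivity : (0:ℝ) < z ^ 2)) hcp]
        calc π A * π B = ENNReal.ofReal (X * M) := by
              rw [ENNReal.ofReal_mul hX0, hX, hM, ENNReal.ofReal_toReal hAne',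
                ENNReal.ofReal_toReal hBne']
          _ ≤ ENNReal.ofReal (Real.exp ((n+1:ℕ) * t ^ 2 / 2 - t * k)) := by
              apply ENNReal.ofReal_le_ofReal
              refine hfinal.trans (le_of_eq ?_)
              rw [hcr, ← Real.exp_add]
              push_cast
              ring_nf

/-- Talagrand/Schechtman: concentration of product measures with
respect to the normalized Hamming distance, with Gaussian bounds given by
absolute constants independent of the probability space. -/
theorem hamming_concentration :
    ∃ C₁ C₂ : ℝ, 0 < C₁ ∧ 0 < C₂ ∧
      ∀ (Y : Type) (_ : MeasurableSpace Y) (μ : Measure Y),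
        IsProbabilityMeasure μ →
        ∀ (n : ℕ) (A : Set (Fin n → Y)), MeasurableSet A →
          (1 / 2 : ENNReal) ≤ Measure.pi (fun _ : Fin n => μ) A →
          ∀ ε : ℝ, 0 < ε →
            1 - ENNReal.ofReal (C₁ * Real.exp (-C₂ * ε ^ 2 * n)) ≤
              Measure.pi (fun _ : Fin n => μ)
                {y | ∃ a ∈ A, ((Set.ncard {i : Fin n | y i ≠ a i} : ℝ) / n) < ε} := by
  refine ⟨2, 1/2, by norm_num, by norm_num, ?_⟩
  intro Y mY μ hμ n A hA hAhalf ε hε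
  haveI := hμ
  set π := Measure.pi (fun _ : Fin n => μ) with hπ
  set S : Set (Fin n → Y) := {y | ∃ a ∈ A, ((Set.ncard {i : Fin n | y i ≠ a i} : ℝ) / n) < ε} with hS
  rcases le_or_gt ε 1 with hε1 | hε1
  · -- main case : use the separation bound
    set T := toMeasurable π S with hT
    have hTm : MeasurableSet T := measurableSet_toMeasurable π S
    have hsep : ∀ a ∈ A, ∀ b ∈ Tᶜ, ε * n ≤ (Set.ncard {i | a i ≠ b i} : ℝ) := by
      intro a ha b hb
      have hbS : b ∉ S := fun h => hb (subset_toMeasurable π S h)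
      have h1 : ¬ ((Set.ncard {i : Fin n | b i ≠ a i} : ℝ) / n < ε) := by
        intro hlt
        exact hbS ⟨a, ha, hlt⟩
      have h2 : ε ≤ (Set.ncard {i : Fin n | b i ≠ a i} : ℝ) / n := not_lt.1 h1
      have hswap : {i : Fin n | a i ≠ b i} = {i : Fin n | b i ≠ a i} := by
        ext i; exact ne_comm
      rw [hswap]
      rcases Nat.eq_zero_or_pos n with hn | hn
      · subst hn; simpa using Nat.cast_nonneg _
      · have hn' : (0:ℝ) < n := by exact_mod_cast hn
        exact (le_div_iff₀ hn').1 h2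
    have hkey := key_sep Y μ hε.le hε1 n (ε * n) A Tᶜ hA hTm.compl hsep
    have hexp : (n : ℝ) * ε ^ 2 / 2 - ε * (ε * n) = -(1/2) * ε ^ 2 * n := by ring
    rw [hexp] at hkey
    have hBbound : π Tᶜ ≤ ENNReal.ofReal (2 * Real.exp (-(1/2) * ε ^ 2 * n)) := by
      have h3 : (1/2 : ENNReal) * π Tᶜ ≤ π A * π Tᶜ := by gcongr
      have h4 : π Tᶜ = 2 * ((1/2 : ENNReal) * π Tᶜ) := by
        rw [← mul_assoc]
        have h40 : (2:ENNReal) * (1/2) = 1 := by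
          rw [one_div, ENNReal.mul_inv_cancel (by norm_num) (by norm_num)]
        rw [h40, one_mul]
      calc π Tᶜ = 2 * ((1/2 : ENNReal) * π Tᶜ) := h4
        _ ≤ 2 * (π A * π Tᶜ) := by gcongr
        _ ≤ 2 * ENNReal.ofReal (Real.exp (-(1/2) * ε ^ 2 * n)) := by gcongr
        _ = ENNReal.ofReal (2 * Real.exp (-(1/2) * ε ^ 2 * n)) := by
            rw [ENNReal.ofReal_mul (by norm_num : (0:ℝ) ≤ 2)]
            norm_num
    rw [tsub_le_iff_right]
    have hST : π S = π T := (measure_toMeasurable S).symm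
    rw [hST]
    have h5 : (1 : ENNReal) = π T + π Tᶜ := by
      rw [measure_add_measure_compl hTm, measure_univ]
    rw [h5]
    exact add_le_add_right hBbound (π T)
  · -- ε > 1 : the neighbourhood is everything
    have hAne : A.Nonempty := by
      rcases Set.eq_empty_or_nonempty A with h | h
      · exfalso
        rw [h, measure_empty] at hAhalf
        simp at hAhalf
      · exact h
    obtain ⟨a, ha⟩ := hAne
    have hSuniv : S = Set.univ := by
      apply Set.eq_univ_of_forall
      intro y
      refine ⟨a, ha, ?_⟩
      have hcard : (Set.ncard {i : Fin n | y i ≠ a i} : ℝ) ≤ n := by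
        have := Set.ncard_le_ncard (Set.subset_univ {i : Fin n | y i ≠ a i}) Set.finite_univ
        rw [Set.ncard_univ, Nat.card_eq_fintype_card, Fintype.card_fin] at this
        exact_mod_cast this
      rcases Nat.eq_zero_or_pos n with hn | hn
      · subst hn
        simpa using hε
      · have hn' : (0:ℝ) < n := by exact_mod_cast hn
        have h6 : (Set.ncard {i : Fin n | y i ≠ a i} : ℝ) / n ≤ 1 :=
          (div_le_one hn').2 hcard
        exact lt_of_le_of_lt h6 hε1
    rw [hSuniv, measure_univ]
    exact tsub_le_self.trans le_rfl
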